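/- (AIS one-step bound) Let (σ, P_AIS, r_AIS) be an (ε, δ)-approximate information state with constant sequences ε_t = ε, δ_t = δ, with respect to the IPM d_F. Let V_AIS be the fixed point of the AIS Bellman equation V_AIS(z) = max_a [r_AIS(z,a) + γ∑_{z'} P_AIS(z'|z,a)V_AIS(z')], and let π_AIS be a greedy policy. Then the suboptimality of the corresponding history-dependent policy satisfies J* − J^{π_AIS} ≤ (2/(1−γ))·[ε + γ·δ·ρ_F(V_AIS)]. -/

import Mathlib

open scoped BigOperators

section

variable {S A Y Z : Type*} [Fintype S] [Fintype A] [Fintype Y] [Fintype Z]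

/-- Probability of a trajectory `(S_t,Y_t,A_t), …, (S_1,Y_1,A_1)` (listed most-recent
first) of a POMDP with initial law `ν` of `(S₁,Y₁)`, dynamics `P(s',y'|s,a)`, and a
history-dependent stochastic policy `π(a | past (y,a)-pairs, current y)`. -/
noncomputable def probTraj (ν : S × Y → ℝ) (P : S → A → S × Y → ℝ)
    (π : List (Y × A) → Y → A → ℝ) : List (S × Y × A) → ℝ
  | [] => 1
  | (s, y, a) :: rest =>
      (match rest with
        | [] => ν (s, y)
        | (s₀, _, a₀) :: _ => P s₀ a₀ (s, y)) *
        π (rest.map fun u => (u.2.1, u.2.2)) y a * probTraj ν P π rest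

/-- A valid (history-dependent) stochastic policy. -/
def validPol (π : List (Y × A) → Y → A → ℝ) : Prop :=
  ∀ h y, (∀ a, 0 ≤ π h y a) ∧ ∑ a, π h y a = 1

/-- Expected reward at time `t+1` (trajectories are indexed chronologically by `Fin (t+1)`
and reversed into the most-recent-first convention). -/
noncomputable def expRtime (ν : S × Y → ℝ) (P : S → A → S × Y → ℝ) (r : S → A → ℝ)
    (π : List (Y × A) → Y → A → ℝ) (t : ℕ) : ℝ :=
  ∑ v : Fin (t + 1) → S × Y × A,
    probTraj ν P π (List.ofFn v).reverse * r (v (Fin.last t)).1 (v (Fin.last t)).2.2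

/-- Performance `J^π = E^π[∑_{t≥1} γ^{t−1} R_t]` of a history-dependent policy. -/
noncomputable def valJ (γ : ℝ) (ν : S × Y → ℝ) (P : S → A → S × Y → ℝ)
    (r : S → A → ℝ) (π : List (Y × A) → Y → A → ℝ) : ℝ :=
  ∑' t : ℕ, γ ^ t * expRtime ν P r π t

/-- The agent state `Z_t = σ_t(H_t)` generated by the recursive update
`Z₁ = φ₀(Y₁)`, `Z_{t+1} = φ(Z_t, Y_{t+1}, A_t)`; the history is given as the list of
past `(y,a)` pairs (most recent first) together with the current observation. -/
def sigAgg (φ0 : Y → Z) (φ : Z → Y → A → Z) : List (Y × A) → Y → Z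
  | [], y => φ0 y
  | (y', a') :: rest, y => φ (sigAgg φ0 φ rest y') y a'

/-- The full trajectory obtained by attaching a state sequence to an observation-action
history (most recent first). -/
def zipSV (w : List (Y × A)) (sv : Fin w.length → S) : List (S × Y × A) :=
  List.ofFn fun i => (sv i, (w.get i).1, (w.get i).2)

/-- Probability of observing the observation-action history `w` (most recent first). -/
noncomputable def histProb (ν : S × Y → ℝ) (P : S → A → S × Y → ℝ)
    (π : List (Y × A) → Y → A → ℝ) (w : List (Y × A)) : ℝ :=
  ∑ sv : Fin w.length → S, probTraj ν P π (zipSV w sv)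

end

namespace AISaux

lemma sum_fin_cons {T M : Type*} [Fintype T] [AddCommMonoid M] (n : ℕ)
    (g : (Fin (n+1) → T) → M) :
    ∑ f : Fin (n+1) → T, g f = ∑ x : T, ∑ f : Fin n → T, g (Fin.cons x f) := by
  rw [← (Fin.consEquiv (fun _ => T)).sum_comp g, Fintype.sum_prod_type]
  rfl

lemma sum_fin_cast {m n : ℕ} (h : m = n) {T : Type*} [Fintype T] {M : Type*} [AddCommMonoid M]
    (g : (Fin m → T) → M) :
    ∑ f : Fin m → T, g f = ∑ f : Fin n → T, g (fun i => f (Fin.cast h i)) := by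
  subst h; simp [Fin.cast_refl]

lemma sum_unzip {T U M : Type*} [Fintype T] [Fintype U] [AddCommMonoid M] (n : ℕ)
    (g : (Fin n → T × U) → M) :
    ∑ u : Fin n → T × U, g u = ∑ a : Fin n → T, ∑ b : Fin n → U, g (fun i => (a i, b i)) := by
  rw [← (Equiv.arrowProdEquivProdArrow (Fin n) (fun _ => T) (fun _ => U)).symm.sum_comp g, Fintype.sum_prod_type]
  rfl

lemma sum_fin_rev {n : ℕ} {T M : Type*} [Fintype T] [AddCommMonoid M] (g : (Fin n → T) → M) :
    ∑ f : Fin n → T, g f = ∑ f : Fin n → T, g (fun i => f i.rev) := by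
  exact (Fintype.sum_equiv (Equiv.arrowCongr (Fin.revPerm) (Equiv.refl T)) _ _ (by
    intro f; congr 1)).symm

lemma ofFn_rev' {n : ℕ} {T : Type*} (v : Fin n → T) :
    (List.ofFn v).reverse = List.ofFn (fun i => v i.rev) := by
  apply List.ext_getElem
  · simp
  · intro i h1 h2
    simp only [List.getElem_reverse, List.getElem_ofFn]
    congr 1
    ext
    simp only [Fin.rev]
    simp at h1 h2 ⊢
    omega

lemma sum_fin_one {T M : Type*} [Fintype T] [AddCommMonoid M] (g : (Fin 1 → T) → M) :
    ∑ f : Fin 1 → T, g f = ∑ x : T, g (fun _ => x) := by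
  rw [← (Equiv.funUnique (Fin 1) T).symm.sum_comp g]
  rfl


variable {S A Y Z : Type*} [Fintype S] [Fintype A] [Fintype Y] [Fintype Z]
set_option linter.unusedSectionVars false

variable (ν : S × Y → ℝ) (P : S → A → S × Y → ℝ) (π : List (Y × A) → Y → A → ℝ)

/-- the trajectory list built from a state-vector and an obs/action-vector,
most recent first. -/
def trajF {n : ℕ} (sv : Fin n → S) (wf : Fin n → Y × A) : List (S × Y × A) :=
  List.ofFn fun i => (sv i, wf i)

/-- probability of an observation/action history. -/
noncomputable def hw {n : ℕ} (wf : Fin n → Y × A) : ℝ :=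
  ∑ sv : Fin n → S, probTraj ν P π (trajF sv wf)

/-- coefficient of the most recent transition. -/
def hcoef : (n : ℕ) → (Fin n → S) → (Fin n → Y × A) → S × Y → ℝ
  | 0, _, _, sy => ν sy
  | (_+1), sv, wf, sy => P (sv 0) (wf 0).2 sy

lemma probTraj_nil : probTraj ν P π ([] : List (S × Y × A)) = 1 := rfl

lemma probTraj_cons (s : S) (y : Y) (a : A) (rest : List (S × Y × A)) :
    probTraj ν P π ((s, y, a) :: rest) =
      (match rest with
        | [] => ν (s, y)
        | (s₀, _, a₀) :: _ => P s₀ a₀ (s, y)) *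
        π (rest.map fun u => (u.2.1, u.2.2)) y a * probTraj ν P π rest := rfl

lemma trajF_zero (sv : Fin 0 → S) (wf : Fin 0 → Y × A) : trajF sv wf = [] := by
  simp [trajF]

lemma trajF_succ {n : ℕ} (sv : Fin (n+1) → S) (wf : Fin (n+1) → Y × A) :
    trajF sv wf = (sv 0, wf 0) :: trajF (fun i => sv i.succ) (fun i => wf i.succ) := by
  simp [trajF, List.ofFn_succ]

lemma trajF_map_proj {n : ℕ} (sv : Fin n → S) (wf : Fin n → Y × A) :
    (trajF sv wf).map (fun u => (u.2.1, u.2.2)) = List.ofFn wf := by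
  simp [trajF, List.map_ofFn]
  rfl

lemma probTraj_trajF_succ {n : ℕ} (sv : Fin (n+1) → S) (wf : Fin (n+1) → Y × A) :
    probTraj ν P π (trajF sv wf) =
      hcoef ν P n (fun i => sv i.succ) (fun i => wf i.succ) (sv 0, (wf 0).1) *
        π (List.ofFn fun i => wf i.succ) (wf 0).1 (wf 0).2 *
        probTraj ν P π (trajF (fun i => sv i.succ) (fun i => wf i.succ)) := by
  rw [trajF_succ]
  rcases h0 : wf 0 with ⟨y, a⟩
  rw [probTraj_cons, trajF_map_proj]
  cases n with
  | zero => rw [trajF_zero]; rfl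
  | succ m =>
      rw [trajF_succ]
      rfl

lemma probTraj_nonneg (hν0 : ∀ sy, 0 ≤ ν sy) (hP0 : ∀ s a sy, 0 ≤ P s a sy)
    (hπ : validPol π) : ∀ l : List (S × Y × A), 0 ≤ probTraj ν P π l := by
  intro l
  induction l with
  | nil => norm_num [probTraj_nil]
  | cons x rest ih =>
      rcases x with ⟨s, y, a⟩
      rw [probTraj_cons]
      refine mul_nonneg (mul_nonneg ?_ ((hπ _ _).1 a)) ih
      match rest with
      | [] => exact hν0 _
      | (s₀, y₀, a₀) :: t => exact hP0 _ _ _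

lemma zip_cast {n : ℕ} {w : List (Y × A)} {wf : Fin n → Y × A}
    (hl : w = List.ofFn wf) (sv : Fin n → S) :
    zipSV w (fun i => sv (Fin.cast (by rw [hl, List.length_ofFn]) i)) = trajF sv wf := by
  subst hl
  apply List.ext_getElem
  · simp [zipSV, trajF]
  · intro i h1 h2
    simp [zipSV, trajF, List.getElem_ofFn, List.get_ofFn]

lemma sum_zip_cast {n : ℕ} {w : List (Y × A)} {wf : Fin n → Y × A}
    (hl : w = List.ofFn wf) (g : (Fin w.length → S) → ℝ) :
    ∑ sv : Fin w.length → S, g sv =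
      ∑ sv : Fin n → S, g (fun i => sv (Fin.cast (by rw [hl, List.length_ofFn]) i)) :=
  sum_fin_cast _ g

lemma histProb_eq {n : ℕ} {w : List (Y × A)} {wf : Fin n → Y × A}
    (hl : w = List.ofFn wf) : histProb ν P π w = hw ν P π wf := by
  rw [histProb, sum_zip_cast hl]
  refine Finset.sum_congr rfl fun sv _ => ?_
  rw [zip_cast hl]


lemma peel (hπ : validPol π) (n : ℕ) (K : (Fin (n+1) → Y × A) → Y → ℝ) :
    ∑ wf : Fin (n+2) → Y × A, ∑ sv : Fin (n+2) → S,
      probTraj ν P π (trajF sv wf) * K (fun i => wf i.succ) ((wf 0).1)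
    = ∑ wf : Fin (n+1) → Y × A, ∑ sv : Fin (n+1) → S, probTraj ν P π (trajF sv wf) *
        ∑ sy' : S × Y, P (sv 0) ((wf 0).2) sy' * K wf sy'.2 := by
  rw [sum_fin_cons]
  have hin : ∀ (x : Y × A) (wf : Fin (n+1) → Y × A),
      (∑ sv : Fin (n+2) → S,
        probTraj ν P π (trajF sv (Fin.cons x wf : Fin (n+2) → Y × A)) *
          K (fun i => (Fin.cons x wf : Fin (n+2) → Y × A) i.succ)
            (((Fin.cons x wf : Fin (n+2) → Y × A) 0).1))
      = ∑ s : S, ∑ sv : Fin (n+1) → S,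
          P (sv 0) ((wf 0).2) (s, x.1) * π (List.ofFn wf) x.1 x.2 *
            probTraj ν P π (trajF sv wf) * K wf x.1 := by
    intro x wf
    rw [sum_fin_cons]
    refine Finset.sum_congr rfl fun s _ => Finset.sum_congr rfl fun sv _ => ?_
    rw [probTraj_trajF_succ]
    simp only [Fin.cons_succ, Fin.cons_zero]
    rfl
  simp only [hin]
  rw [Finset.sum_comm]
  refine Finset.sum_congr rfl fun wf _ => ?_
  -- now: ∑ x : Y × A, ∑ s, ∑ sv, c = ∑ sv, prob * ∑ sy', P * K
  rw [Fintype.sum_prod_type]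
  -- ∑ y, ∑ a, ∑ s, ∑ sv, c
  have h1 : ∀ y : Y, (∑ a : A, ∑ s : S, ∑ sv : Fin (n+1) → S,
      P (sv 0) ((wf 0).2) (s, y) * π (List.ofFn wf) y a *
        probTraj ν P π (trajF sv wf) * K wf y)
      = ∑ s : S, ∑ sv : Fin (n+1) → S,
          P (sv 0) ((wf 0).2) (s, y) * probTraj ν P π (trajF sv wf) * K wf y := by
    intro y
    rw [Finset.sum_comm]
    refine Finset.sum_congr rfl fun s _ => ?_
    rw [Finset.sum_comm]
    refine Finset.sum_congr rfl fun sv _ => ?_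
    rw [← Finset.sum_mul, ← Finset.sum_mul, ← Finset.mul_sum, (hπ (List.ofFn wf) y).2,
      mul_one]
  simp only [h1]
  rw [Finset.sum_comm]
  rw [show (∑ s : S, ∑ y : Y, ∑ sv : Fin (n+1) → S,
      P (sv 0) ((wf 0).2) (s, y) * probTraj ν P π (trajF sv wf) * K wf y)
    = ∑ s : S, ∑ sv : Fin (n+1) → S, ∑ y : Y,
      P (sv 0) ((wf 0).2) (s, y) * probTraj ν P π (trajF sv wf) * K wf y from
    Finset.sum_congr rfl fun s _ => Finset.sum_comm]
  rw [Finset.sum_comm]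
  refine Finset.sum_congr rfl fun sv _ => ?_
  rw [Finset.mul_sum, Fintype.sum_prod_type]
  refine Finset.sum_congr rfl fun s _ => Finset.sum_congr rfl fun y _ => ?_
  ring


/-- total probability of all histories of length `n` is 1. -/
lemma htot (hν0 : ∀ sy, 0 ≤ ν sy) (hν1 : ∑ sy : S × Y, ν sy = 1)
    (hP1 : ∀ s a, ∑ sy : S × Y, P s a sy = 1) (hπ : validPol π) :
    ∀ n : ℕ, ∑ wf : Fin (n+1) → Y × A, hw ν P π wf = 1 := by
  intro n
  induction n with
  | zero =>
      simp only [hw]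
      rw [sum_fin_cons]
      have h1 : ∀ (x : Y × A) (f : Fin 0 → Y × A),
          (∑ sv : Fin (0+1) → S,
            probTraj ν P π (trajF sv (Fin.cons x f : Fin (0+1) → Y × A)))
          = ∑ s : S, ν (s, x.1) * π [] x.1 x.2 := by
        intro x f
        rw [sum_fin_one]
        refine Finset.sum_congr rfl fun s _ => ?_
        rw [trajF_succ, trajF_zero, probTraj_cons]
        simp [probTraj_nil]
      simp only [h1]
      have h2 : ∀ y : Y, ∑ a : A, ∑ s : S, ν (s, y) * π [] y a = ∑ s : S, ν (s, y) := by
        intro y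
        rw [Finset.sum_comm]
        refine Finset.sum_congr rfl fun s _ => ?_
        rw [← Finset.mul_sum, (hπ [] y).2, mul_one]
      have huniq : ∀ (c : ℝ), (∑ _f : Fin 0 → Y × A, c) = c := by
        intro c; simp
      simp only [huniq]
      rw [Fintype.sum_prod_type]
      simp only [h2]
      rw [← hν1, Fintype.sum_prod_type, Finset.sum_comm]
  | succ m ih =>
      simp only [hw]
      have := peel ν P π hπ m (fun _ _ => (1:ℝ))
      simp only [mul_one] at this
      rw [this]
      simp only [hw] at ih
      rw [← ih]
      refine Finset.sum_congr rfl fun wf _ => Finset.sum_congr rfl fun sv _ => ?_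
      rw [hP1 (sv 0) ((wf 0).2), mul_one]


variable [DecidableEq Z] (φ0 : Y → Z) (φ : Z → Y → A → Z) (VAIS : Z → ℝ)

/-- agent state at the end of a history. -/
def Zof {n : ℕ} (wf : Fin (n+1) → Y × A) : Z :=
  sigAgg φ0 φ (List.ofFn fun i => wf i.succ) (wf 0).1

lemma sigAgg_ofFn_succ {n : ℕ} (wf : Fin (n+1) → Y × A) (y : Y) :
    sigAgg φ0 φ (List.ofFn wf) y = φ (Zof φ0 φ wf) y (wf 0).2 := by
  rw [List.ofFn_succ]
  rcases h : wf 0 with ⟨y1, a1⟩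
  simp [sigAgg, Zof, h]

noncomputable def uvec (n : ℕ) : ℝ :=
  ∑ wf : Fin (n+1) → Y × A, ∑ sv : Fin (n+1) → S,
    probTraj ν P π (trajF sv wf) * VAIS (Zof φ0 φ wf)

lemma expRtime_eq (r : S → A → ℝ) (n : ℕ) :
    expRtime ν P r π n = ∑ wf : Fin (n+1) → Y × A, ∑ sv : Fin (n+1) → S,
      probTraj ν P π (trajF sv wf) * r (sv 0) ((wf 0).2) := by
  rw [expRtime, sum_unzip, Finset.sum_comm, sum_fin_rev]
  refine Finset.sum_congr rfl fun wf _ => ?_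
  rw [sum_fin_rev]
  refine Finset.sum_congr rfl fun sv _ => ?_
  show probTraj ν P π (List.ofFn fun i => (sv i.rev, wf i.rev)).reverse *
      r (sv (Fin.last n).rev) ((wf (Fin.last n).rev)).2
    = probTraj ν P π (trajF sv wf) * r (sv 0) ((wf 0).2)
  rw [ofFn_rev']
  simp [Fin.rev_rev, Fin.rev_last, trajF]

lemma uvec_succ (hπ : validPol π) (n : ℕ) :
    uvec ν P π φ0 φ VAIS (n+1) = ∑ wf : Fin (n+1) → Y × A, ∑ sv : Fin (n+1) → S,
      probTraj ν P π (trajF sv wf) *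
        ∑ sy' : S × Y, P (sv 0) ((wf 0).2) sy' * VAIS (φ (Zof φ0 φ wf) sy'.2 ((wf 0).2)) := by
  have h := peel ν P π hπ n (fun wf y => VAIS (sigAgg φ0 φ (List.ofFn wf) y))
  rw [uvec]
  rw [show (∑ wf : Fin (n+2) → Y × A, ∑ sv : Fin (n+2) → S,
        probTraj ν P π (trajF sv wf) * VAIS (Zof φ0 φ wf))
      = ∑ wf : Fin (n+2) → Y × A, ∑ sv : Fin (n+2) → S,
        probTraj ν P π (trajF sv wf) *
          (fun wf' y => VAIS (sigAgg φ0 φ (List.ofFn wf') y)) (fun i => wf i.succ) ((wf 0).1)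
      from rfl]
  rw [h]
  refine Finset.sum_congr rfl fun wf _ => Finset.sum_congr rfl fun sv _ => ?_
  congr 1
  refine Finset.sum_congr rfl fun sy' _ => ?_
  rw [sigAgg_ofFn_succ]

lemma uvec_zero (hπ : validPol π) :
    uvec ν P π φ0 φ VAIS 0 = ∑ sy : S × Y, ν sy * VAIS (φ0 sy.2) := by
  rw [uvec, sum_fin_one]
  have h1 : ∀ x : Y × A, (∑ sv : Fin (0+1) → S,
      probTraj ν P π (trajF sv (fun _ : Fin (0+1) => x)) *
        VAIS (Zof φ0 φ (fun _ : Fin (0+1) => x)))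
      = ∑ s : S, ν (s, x.1) * π [] x.1 x.2 * VAIS (φ0 x.1) := by
    intro x
    rw [sum_fin_one]
    refine Finset.sum_congr rfl fun s _ => ?_
    rw [trajF_succ, trajF_zero, probTraj_cons]
    have hz : Zof φ0 φ (fun _ : Fin (0+1) => x) = φ0 x.1 := by
      simp [Zof, sigAgg]
    rw [hz]
    simp [probTraj_nil]
  simp only [h1]
  rw [Fintype.sum_prod_type]
  have h2 : ∀ y : Y, (∑ a : A, ∑ s : S, ν (s, y) * π [] y a * VAIS (φ0 y))
      = ∑ s : S, ν (s, y) * VAIS (φ0 y) := by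
    intro y
    rw [Finset.sum_comm]
    refine Finset.sum_congr rfl fun s _ => ?_
    have : ∀ a : A, ν (s, y) * π [] y a * VAIS (φ0 y) = π [] y a * (ν (s, y) * VAIS (φ0 y)) := by
      intro a; ring
    simp only [this]
    rw [← Finset.sum_mul, (hπ [] y).2, one_mul]
  simp only [h2]
  rw [Fintype.sum_prod_type, Finset.sum_comm]


lemma cons_ofFn_eq {n : ℕ} (wf : Fin (n+1) → Y × A) :
    (((wf 0).1, (wf 0).2)) :: List.ofFn (fun i => wf i.succ) = List.ofFn wf := by
  simp [List.ofFn_succ]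

lemma AP1num_eq {n : ℕ} (r : S → A → ℝ) (wf : Fin (n+1) → Y × A) :
    (∑ sv : Fin ((((wf 0).1, (wf 0).2)) :: List.ofFn (fun i => wf i.succ)).length → S,
        probTraj ν P π (zipSV ((((wf 0).1, (wf 0).2)) :: List.ofFn (fun i => wf i.succ)) sv) *
          r (sv ⟨0, by simp⟩) ((wf 0).2))
    = ∑ sv : Fin (n+1) → S, probTraj ν P π (trajF sv wf) * r (sv 0) ((wf 0).2) := by
  rw [sum_zip_cast (cons_ofFn_eq wf)]
  refine Finset.sum_congr rfl fun sv _ => ?_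
  rw [zip_cast (cons_ofFn_eq wf)]
  simp

lemma AP2num_eq {n : ℕ} (wf : Fin (n+1) → Y × A) (z' : Z) :
    (∑ sv : Fin ((((wf 0).1, (wf 0).2)) :: List.ofFn (fun i => wf i.succ)).length → S,
      ∑ sy' : S × Y,
        probTraj ν P π (zipSV ((((wf 0).1, (wf 0).2)) :: List.ofFn (fun i => wf i.succ)) sv) *
          P (sv ⟨0, by simp⟩) ((wf 0).2) sy' *
          (if z' = φ (sigAgg φ0 φ (List.ofFn (fun i => wf i.succ)) ((wf 0).1)) sy'.2 ((wf 0).2)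
            then 1 else 0))
    = ∑ sv : Fin (n+1) → S, ∑ sy' : S × Y,
        probTraj ν P π (trajF sv wf) * P (sv 0) ((wf 0).2) sy' *
          (if z' = φ (Zof φ0 φ wf) sy'.2 ((wf 0).2) then 1 else 0) := by
  rw [sum_zip_cast (cons_ofFn_eq wf)]
  refine Finset.sum_congr rfl fun sv _ => Finset.sum_congr rfl fun sy' _ => ?_
  rw [zip_cast (cons_ofFn_eq wf)]
  congr 1

lemma sum_ind_collapse {n : ℕ} (wf : Fin (n+1) → Y × A) :
    (∑ z' : Z, VAIS z' * ∑ sv : Fin (n+1) → S, ∑ sy' : S × Y,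
        probTraj ν P π (trajF sv wf) * P (sv 0) ((wf 0).2) sy' *
          (if z' = φ (Zof φ0 φ wf) sy'.2 ((wf 0).2) then 1 else 0))
    = ∑ sv : Fin (n+1) → S, probTraj ν P π (trajF sv wf) *
        ∑ sy' : S × Y, P (sv 0) ((wf 0).2) sy' * VAIS (φ (Zof φ0 φ wf) sy'.2 ((wf 0).2)) := by
  simp only [Finset.mul_sum]
  rw [Finset.sum_comm]
  refine Finset.sum_congr rfl fun sv _ => ?_
  rw [Finset.sum_comm]
  refine Finset.sum_congr rfl fun sy' _ => ?_
  simp only [mul_ite, mul_one, mul_zero]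
  rw [Finset.sum_ite_eq' Finset.univ]
  simp only [Finset.mem_univ, if_true]
  ring


lemma hw_nonneg (hν0 : ∀ sy, 0 ≤ ν sy) (hP0 : ∀ s a sy, 0 ≤ P s a sy) (hπ : validPol π)
    {n : ℕ} (wf : Fin n → Y × A) : 0 ≤ hw ν P π wf :=
  Finset.sum_nonneg fun sv _ => probTraj_nonneg ν P π hν0 hP0 hπ _

lemma prob_eq_zero_of_hw_eq_zero (hν0 : ∀ sy, 0 ≤ ν sy) (hP0 : ∀ s a sy, 0 ≤ P s a sy)
    (hπ : validPol π) {n : ℕ} (wf : Fin n → Y × A) (h : hw ν P π wf = 0) :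
    ∀ sv : Fin n → S, probTraj ν P π (trajF sv wf) = 0 := by
  intro sv
  have := (Finset.sum_eq_zero_iff_of_nonneg
    (fun sv _ => probTraj_nonneg ν P π hν0 hP0 hπ (trajF sv wf))).mp h
  exact this sv (Finset.mem_univ sv)

lemma uvec_abs_le (hν0 : ∀ sy, 0 ≤ ν sy) (hν1 : ∑ sy : S × Y, ν sy = 1)
    (hP0 : ∀ s a sy, 0 ≤ P s a sy) (hP1 : ∀ s a, ∑ sy : S × Y, P s a sy = 1)
    (hπ : validPol π) (n : ℕ) :
    |uvec ν P π φ0 φ VAIS n| ≤ ∑ z : Z, |VAIS z| := by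
  set Vm : ℝ := ∑ z : Z, |VAIS z| with hVm
  have hVz : ∀ z : Z, |VAIS z| ≤ Vm := fun z =>
    Finset.single_le_sum (fun z _ => abs_nonneg (VAIS z)) (Finset.mem_univ z)
  have h1 : |uvec ν P π φ0 φ VAIS n| ≤ ∑ wf : Fin (n+1) → Y × A, ∑ sv : Fin (n+1) → S,
      probTraj ν P π (trajF sv wf) * Vm := by
    refine le_trans (Finset.abs_sum_le_sum_abs _ _) (Finset.sum_le_sum fun wf _ => ?_)
    refine le_trans (Finset.abs_sum_le_sum_abs _ _) (Finset.sum_le_sum fun sv _ => ?_)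
    rw [abs_mul, abs_of_nonneg (probTraj_nonneg ν P π hν0 hP0 hπ _)]
    exact mul_le_mul_of_nonneg_left (hVz _) (probTraj_nonneg ν P π hν0 hP0 hπ _)
  refine le_trans h1 ?_
  have h2 : ∀ wf : Fin (n+1) → Y × A, (∑ sv : Fin (n+1) → S,
      probTraj ν P π (trajF sv wf) * Vm) = hw ν P π wf * Vm := by
    intro wf; rw [hw, Finset.sum_mul]
  simp only [h2]
  rw [← Finset.sum_mul, htot ν P π hν0 hν1 hP1 hπ n, one_mul]

lemma eR_bounds (hν0 : ∀ sy, 0 ≤ ν sy) (hν1 : ∑ sy : S × Y, ν sy = 1)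
    (hP0 : ∀ s a sy, 0 ≤ P s a sy) (hP1 : ∀ s a, ∑ sy : S × Y, P s a sy = 1)
    (hπ : validPol π) (Rmax : ℝ) (r : S → A → ℝ) (hr : ∀ s a, r s a ∈ Set.Icc (0:ℝ) Rmax)
    (n : ℕ) : 0 ≤ expRtime ν P r π n ∧ expRtime ν P r π n ≤ Rmax := by
  rw [expRtime_eq]
  constructor
  · refine Finset.sum_nonneg fun wf _ => Finset.sum_nonneg fun sv _ => ?_
    exact mul_nonneg (probTraj_nonneg ν P π hν0 hP0 hπ _) (hr _ _).1
  · have h1 : (∑ wf : Fin (n+1) → Y × A, ∑ sv : Fin (n+1) → S,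
        probTraj ν P π (trajF sv wf) * r (sv 0) ((wf 0).2))
        ≤ ∑ wf : Fin (n+1) → Y × A, ∑ sv : Fin (n+1) → S,
        probTraj ν P π (trajF sv wf) * Rmax := by
      refine Finset.sum_le_sum fun wf _ => Finset.sum_le_sum fun sv _ => ?_
      exact mul_le_mul_of_nonneg_left (hr _ _).2 (probTraj_nonneg ν P π hν0 hP0 hπ _)
    refine le_trans h1 ?_
    have h2 : ∀ wf : Fin (n+1) → Y × A, (∑ sv : Fin (n+1) → S,
        probTraj ν P π (trajF sv wf) * Rmax) = hw ν P π wf * Rmax := by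
      intro wf; rw [hw, Finset.sum_mul]
    simp only [h2]
    rw [← Finset.sum_mul, htot ν P π hν0 hν1 hP1 hπ n, one_mul]

end AISaux


section

variable {S A Y Z : Type*} [Fintype S] [Fintype A] [Fintype Y] [Fintype Z]

/-- **AIS suboptimality bound.** If `(σ, P_AIS, r_AIS)` is an `(ε,δ)`-approximate
information state with respect to the IPM `d_F` of a convex balanced function class `F`
— (AP1): the reward is predicted up to `ε`, (AP2): the next agent state is predicted up
to `δ` in `d_F` — then the greedy policy of the AIS dynamic program satisfies
`J* − J^{π_AIS} ≤ (2/(1−γ))·[ε + γ·δ·ρ_F(V_AIS)]`, the Minkowski functional `ρ_F(V_AIS)`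
being rendered through its defining property (any admissible scaling `ρ`; if none exists
the claim is vacuous, matching `ρ_F = ∞`). -/
theorem stmt_15 [DecidableEq A] [DecidableEq Z] [Nonempty A]
    (γ : ℝ) (hγ0 : 0 < γ) (hγ1 : γ < 1)
    (Rmax : ℝ) (r : S → A → ℝ) (hr : ∀ s a, r s a ∈ Set.Icc (0 : ℝ) Rmax)
    (ν : S × Y → ℝ) (hν0 : ∀ sy, 0 ≤ ν sy) (hν1 : ∑ sy : S × Y, ν sy = 1)
    (P : S → A → S × Y → ℝ) (hP0 : ∀ s a sy, 0 ≤ P s a sy)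
    (hP1 : ∀ s a, ∑ sy : S × Y, P s a sy = 1)
    (φ0 : Y → Z) (φ : Z → Y → A → Z)
    (F : Set (Z → ℝ)) (hconv : Convex ℝ F)
    (hbal : ∀ f ∈ F, ∀ c : ℝ, |c| ≤ 1 → c • f ∈ F)
    (rAIS : Z → A → ℝ) (PAIS : Z → A → Z → ℝ)
    (ε δ : ℝ) (hε : 0 ≤ ε) (hδ : 0 ≤ δ)
    -- (AP1): approximately sufficient for performance evaluation
    (hAP1 : ∀ π : List (Y × A) → Y → A → ℝ, validPol π →
      ∀ (y : Y) (a : A) (past : List (Y × A)),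
        0 < histProb ν P π ((y, a) :: past) →
        |(∑ sv : Fin ((y, a) :: past).length → S,
            probTraj ν P π (zipSV ((y, a) :: past) sv) * r (sv ⟨0, by simp⟩) a) /
          histProb ν P π ((y, a) :: past) - rAIS (sigAgg φ0 φ past y) a| ≤ ε)
    -- (AP2): approximately sufficient for predicting itself, in the IPM `d_F`
    (hAP2 : ∀ π : List (Y × A) → Y → A → ℝ, validPol π →
      ∀ (y : Y) (a : A) (past : List (Y × A)),
        0 < histProb ν P π ((y, a) :: past) →
        ∀ f ∈ F,
        |∑ z' : Z, f z' *
            ((∑ sv : Fin ((y, a) :: past).length → S, ∑ sy' : S × Y,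
                probTraj ν P π (zipSV ((y, a) :: past) sv) * P (sv ⟨0, by simp⟩) a sy' *
                  (if z' = φ (sigAgg φ0 φ past y) sy'.2 a then 1 else 0)) /
              histProb ν P π ((y, a) :: past)) -
          ∑ z' : Z, f z' * PAIS (sigAgg φ0 φ past y) a z'| ≤ δ)
    -- the AIS dynamic program and a greedy selector
    (QAIS : Z → A → ℝ) (VAIS : Z → ℝ)
    (hQ : ∀ z a, QAIS z a = rAIS z a + γ * ∑ z' : Z, PAIS z a z' * VAIS z')
    (hV : ∀ z, VAIS z = ⨆ a, QAIS z a)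
    (g : Z → A) (hg : ∀ z, QAIS z (g z) = VAIS z)
    (ρ : ℝ) (hρ : 0 < ρ) (hVρ : (fun z => VAIS z / ρ) ∈ F) :
    (⨆ π : {π : List (Y × A) → Y → A → ℝ // validPol π}, valJ γ ν P r π.1) -
        valJ γ ν P r (fun past y a => if a = g (sigAgg φ0 φ past y) then 1 else 0) ≤
      2 / (1 - γ) * (ε + γ * δ * ρ) := by
  classical
  set c : ℝ := ε + γ * (δ * ρ) with hc_def
  have hγ0' : (0:ℝ) ≤ γ := le_of_lt hγ0
  have h1γ : (0:ℝ) < 1 - γ := by linarith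
  have hc0 : 0 ≤ c := by positivity
  -- the greedy policy
  set πg : List (Y × A) → Y → A → ℝ :=
    fun past y a => if a = g (sigAgg φ0 φ past y) then 1 else 0 with hπg_def
  have hπgval : validPol πg := by
    intro h y
    constructor
    · intro a; dsimp [πg]; split <;> norm_num
    · simp [πg]
  -- value of Q is below V
  have hQle : ∀ z a, QAIS z a ≤ VAIS z := by
    intro z a
    rw [hV z]
    exact le_ciSup (Set.Finite.bddAbove (Set.finite_range _)) a
  -- abbreviations
  have hU0 : ∀ (π : List (Y × A) → Y → A → ℝ), validPol π →
      AISaux.uvec ν P π φ0 φ VAIS 0 = ∑ sy : S × Y, ν sy * VAIS (φ0 sy.2) :=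
    fun π hπ => AISaux.uvec_zero ν P π φ0 φ VAIS hπ
  set U0 : ℝ := ∑ sy : S × Y, ν sy * VAIS (φ0 sy.2) with hU0_def
  set Vm : ℝ := ∑ z : Z, |VAIS z| with hVm_def
  -- per-policy: core step estimate
  have step : ∀ (π : List (Y × A) → Y → A → ℝ), validPol π → ∀ n : ℕ,
      |expRtime ν P r π n + γ * AISaux.uvec ν P π φ0 φ VAIS (n+1)
          - AISaux.uvec ν P π φ0 φ VAIS n
        - ∑ wf : Fin (n+1) → Y × A, AISaux.hw ν P π wf *
            (QAIS (AISaux.Zof φ0 φ wf) ((wf 0).2) - VAIS (AISaux.Zof φ0 φ wf))| ≤ c := by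
    intro π hπ n
    set cRw : (Fin (n+1) → Y × A) → ℝ := fun wf => ∑ sv : Fin (n+1) → S,
      probTraj ν P π (AISaux.trajF sv wf) * r (sv 0) ((wf 0).2) with hcRw_def
    set cBw : (Fin (n+1) → Y × A) → ℝ := fun wf => ∑ sv : Fin (n+1) → S,
      probTraj ν P π (AISaux.trajF sv wf) * ∑ sy' : S × Y,
        P (sv 0) ((wf 0).2) sy' * VAIS (φ (AISaux.Zof φ0 φ wf) sy'.2 ((wf 0).2)) with hcBw_def
    set SP : (Fin (n+1) → Y × A) → ℝ := fun wf =>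
      ∑ z' : Z, PAIS (AISaux.Zof φ0 φ wf) ((wf 0).2) z' * VAIS z' with hSP_def
    have he : expRtime ν P r π n = ∑ wf : Fin (n+1) → Y × A, cRw wf :=
      AISaux.expRtime_eq ν P π r n
    have hu1 : AISaux.uvec ν P π φ0 φ VAIS (n+1) = ∑ wf : Fin (n+1) → Y × A, cBw wf :=
      AISaux.uvec_succ ν P π φ0 φ VAIS hπ n
    have hu0' : AISaux.uvec ν P π φ0 φ VAIS n = ∑ wf : Fin (n+1) → Y × A,
        AISaux.hw ν P π wf * VAIS (AISaux.Zof φ0 φ wf) := by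
      rw [AISaux.uvec]
      exact Finset.sum_congr rfl fun wf _ => (Finset.sum_mul _ _ _).symm
    -- the per-history estimates
    have est : ∀ wf : Fin (n+1) → Y × A,
        |cRw wf - AISaux.hw ν P π wf * rAIS (AISaux.Zof φ0 φ wf) ((wf 0).2)| ≤
            AISaux.hw ν P π wf * ε ∧
        |cBw wf - AISaux.hw ν P π wf * SP wf| ≤ AISaux.hw ν P π wf * (δ * ρ) := by
      intro wf
      rcases eq_or_lt_of_le (AISaux.hw_nonneg ν P π hν0 hP0 hπ wf) with h0 | hpos
      · have hz := AISaux.prob_eq_zero_of_hw_eq_zero ν P π hν0 hP0 hπ wf h0.symm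
        have hcR0 : cRw wf = 0 := Finset.sum_eq_zero fun sv _ => by rw [hz sv, zero_mul]
        have hcB0 : cBw wf = 0 := Finset.sum_eq_zero fun sv _ => by rw [hz sv, zero_mul]
        rw [hcR0, hcB0, ← h0]
        norm_num
      · have hpos' : 0 < histProb ν P π
            ((((wf 0).1, (wf 0).2)) :: List.ofFn (fun i => wf i.succ)) := by
          rw [AISaux.histProb_eq ν P π (AISaux.cons_ofFn_eq wf)]
          exact hpos
        constructor
        · have h1 := hAP1 π hπ ((wf 0).1) ((wf 0).2) (List.ofFn fun i => wf i.succ) hpos'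
          rw [AISaux.AP1num_eq ν P π r wf,
            AISaux.histProb_eq ν P π (AISaux.cons_ofFn_eq wf)] at h1
          have hre : cRw wf - AISaux.hw ν P π wf * rAIS (AISaux.Zof φ0 φ wf) ((wf 0).2)
              = AISaux.hw ν P π wf * (cRw wf / AISaux.hw ν P π wf
                - rAIS (AISaux.Zof φ0 φ wf) ((wf 0).2)) := by
            field_simp
          rw [hre, abs_mul, abs_of_pos hpos]
          exact mul_le_mul_of_nonneg_left h1 hpos.le
        · have h2 := hAP2 π hπ ((wf 0).1) ((wf 0).2) (List.ofFn fun i => wf i.succ) hpos'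
            (fun z => VAIS z / ρ) hVρ
          rw [AISaux.histProb_eq ν P π (AISaux.cons_ofFn_eq wf)] at h2
          simp only [AISaux.AP2num_eq ν P π φ0 φ wf] at h2
          have e1 : (∑ z' : Z, VAIS z' / ρ *
              ((∑ sv : Fin (n+1) → S, ∑ sy' : S × Y,
                probTraj ν P π (AISaux.trajF sv wf) * P (sv 0) ((wf 0).2) sy' *
                  (if z' = φ (AISaux.Zof φ0 φ wf) sy'.2 ((wf 0).2) then 1 else 0)) /
                AISaux.hw ν P π wf))
              = cBw wf / (ρ * AISaux.hw ν P π wf) := by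
            simp only [hcBw_def]
            rw [← AISaux.sum_ind_collapse ν P π φ0 φ VAIS wf, Finset.sum_div]
            refine Finset.sum_congr rfl fun z' _ => ?_
            rw [div_mul_div_comm]
          have e2 : (∑ z' : Z, VAIS z' / ρ *
              PAIS (sigAgg φ0 φ (List.ofFn fun i => wf i.succ) ((wf 0).1)) ((wf 0).2) z')
              = SP wf / ρ := by
            rw [hSP_def, Finset.sum_div]
            refine Finset.sum_congr rfl fun z' _ => ?_
            have : sigAgg φ0 φ (List.ofFn fun i => wf i.succ) ((wf 0).1)
                = AISaux.Zof φ0 φ wf := rfl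
            rw [this]
            ring
          rw [e1, e2] at h2
          have hre : cBw wf - AISaux.hw ν P π wf * SP wf
              = (AISaux.hw ν P π wf * ρ) * (cBw wf / (ρ * AISaux.hw ν P π wf)
                - SP wf / ρ) := by
            field_simp
          rw [hre, abs_mul, abs_of_pos (mul_pos hpos hρ)]
          calc AISaux.hw ν P π wf * ρ * |cBw wf / (ρ * AISaux.hw ν P π wf) - SP wf / ρ|
              ≤ AISaux.hw ν P π wf * ρ * δ :=
                mul_le_mul_of_nonneg_left h2 (mul_pos hpos hρ).le
            _ = AISaux.hw ν P π wf * (δ * ρ) := by ring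
    -- assemble
    have key : expRtime ν P r π n + γ * AISaux.uvec ν P π φ0 φ VAIS (n+1)
        - AISaux.uvec ν P π φ0 φ VAIS n
        - (∑ wf : Fin (n+1) → Y × A, AISaux.hw ν P π wf *
            (QAIS (AISaux.Zof φ0 φ wf) ((wf 0).2) - VAIS (AISaux.Zof φ0 φ wf)))
        = ∑ wf : Fin (n+1) → Y × A,
            ((cRw wf - AISaux.hw ν P π wf * rAIS (AISaux.Zof φ0 φ wf) ((wf 0).2))
              + γ * (cBw wf - AISaux.hw ν P π wf * SP wf)) := by
      rw [he, hu1, hu0', Finset.mul_sum, ← Finset.sum_add_distrib,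
        ← Finset.sum_sub_distrib, ← Finset.sum_sub_distrib]
      refine Finset.sum_congr rfl fun wf _ => ?_
      rw [hQ]
      show cRw wf + γ * cBw wf - AISaux.hw ν P π wf * VAIS (AISaux.Zof φ0 φ wf)
        - AISaux.hw ν P π wf * (rAIS (AISaux.Zof φ0 φ wf) ((wf 0).2) + γ * SP wf
          - VAIS (AISaux.Zof φ0 φ wf)) = _
      ring
    rw [key]
    calc |∑ wf : Fin (n+1) → Y × A,
        ((cRw wf - AISaux.hw ν P π wf * rAIS (AISaux.Zof φ0 φ wf) ((wf 0).2))
          + γ * (cBw wf - AISaux.hw ν P π wf * SP wf))|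
        ≤ ∑ wf : Fin (n+1) → Y × A,
          |(cRw wf - AISaux.hw ν P π wf * rAIS (AISaux.Zof φ0 φ wf) ((wf 0).2))
            + γ * (cBw wf - AISaux.hw ν P π wf * SP wf)| :=
          Finset.abs_sum_le_sum_abs _ _
      _ ≤ ∑ wf : Fin (n+1) → Y × A, AISaux.hw ν P π wf * c := by
          refine Finset.sum_le_sum fun wf _ => ?_
          refine le_trans (abs_add_le _ _) ?_
          rw [abs_mul, abs_of_pos hγ0]
          have h1 := (est wf).1
          have h2 := mul_le_mul_of_nonneg_left (est wf).2 hγ0'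
          rw [hc_def]
          nlinarith [AISaux.hw_nonneg ν P π hν0 hP0 hπ wf]
      _ = c := by
          rw [← Finset.sum_mul, AISaux.htot ν P π hν0 hν1 hP1 hπ n, one_mul]
  -- bounds on the auxiliary sequences
  have huvec_bd : ∀ (π : List (Y × A) → Y → A → ℝ), validPol π → ∀ n : ℕ,
      |AISaux.uvec ν P π φ0 φ VAIS n| ≤ Vm :=
    fun π hπ n => AISaux.uvec_abs_le ν P π φ0 φ VAIS hν0 hν1 hP0 hP1 hπ n
  have heR_bd : ∀ (π : List (Y × A) → Y → A → ℝ), validPol π → ∀ n : ℕ,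
      0 ≤ expRtime ν P r π n ∧ expRtime ν P r π n ≤ Rmax :=
    fun π hπ n => AISaux.eR_bounds ν P π hν0 hν1 hP0 hP1 hπ Rmax r hr n
  have hVm0 : 0 ≤ Vm := Finset.sum_nonneg fun z _ => abs_nonneg _
  have hgeom : Summable (fun t : ℕ => γ ^ t) := summable_geometric_of_lt_one hγ0' hγ1
  have hd_sum : ∀ (π : List (Y × A) → Y → A → ℝ), validPol π →
      Summable (fun t : ℕ => γ ^ t * (expRtime ν P r π t
        + γ * AISaux.uvec ν P π φ0 φ VAIS (t+1) - AISaux.uvec ν P π φ0 φ VAIS t)) := by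
    intro π hπ
    have hsu : Summable (fun t : ℕ => γ ^ t * AISaux.uvec ν P π φ0 φ VAIS t) := by
      refine Summable.of_abs (Summable.of_nonneg_of_le (fun t => abs_nonneg _)
        (fun t => ?_) (hgeom.mul_right Vm))
      rw [abs_mul, abs_of_nonneg (pow_nonneg hγ0' t)]
      exact mul_le_mul_of_nonneg_left (huvec_bd π hπ t) (pow_nonneg hγ0' t)
    have hsu' : Summable (fun t : ℕ => γ ^ t * AISaux.uvec ν P π φ0 φ VAIS (t+1)) := by
      refine Summable.of_abs (Summable.of_nonneg_of_le (fun t => abs_nonneg _)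
        (fun t => ?_) (hgeom.mul_right Vm))
      rw [abs_mul, abs_of_nonneg (pow_nonneg hγ0' t)]
      exact mul_le_mul_of_nonneg_left (huvec_bd π hπ (t+1)) (pow_nonneg hγ0' t)
    have hse : Summable (fun t : ℕ => γ ^ t * expRtime ν P r π t) := by
      refine Summable.of_abs (Summable.of_nonneg_of_le (fun t => abs_nonneg _)
        (fun t => ?_) (hgeom.mul_right Rmax))
      rw [abs_mul, abs_of_nonneg (pow_nonneg hγ0' t), abs_of_nonneg (heR_bd π hπ t).1]
      exact mul_le_mul_of_nonneg_left (heR_bd π hπ t).2 (pow_nonneg hγ0' t)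
    have h1 : (fun t : ℕ => γ ^ t * (expRtime ν P r π t
        + γ * AISaux.uvec ν P π φ0 φ VAIS (t+1) - AISaux.uvec ν P π φ0 φ VAIS t))
        = fun t : ℕ => (γ ^ t * expRtime ν P r π t
          + γ * (γ ^ t * AISaux.uvec ν P π φ0 φ VAIS (t+1)))
          - γ ^ t * AISaux.uvec ν P π φ0 φ VAIS t := by
      funext t; ring
    rw [h1]
    exact (hse.add (hsu'.mul_left γ)).sub hsu
  -- telescoping identity
  have tele : ∀ (π : List (Y × A) → Y → A → ℝ), validPol π →
      valJ γ ν P r π = AISaux.uvec ν P π φ0 φ VAIS 0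
        + ∑' t : ℕ, γ ^ t * (expRtime ν P r π t
            + γ * AISaux.uvec ν P π φ0 φ VAIS (t+1) - AISaux.uvec ν P π φ0 φ VAIS t) := by
    intro π hπ
    set u : ℕ → ℝ := fun n => AISaux.uvec ν P π φ0 φ VAIS n with hu_def
    set e : ℕ → ℝ := fun n => expRtime ν P r π n with he_def
    have hVm0 : 0 ≤ Vm := Finset.sum_nonneg fun z _ => abs_nonneg _
    have hgeom : Summable (fun t : ℕ => γ ^ t) := summable_geometric_of_lt_one hγ0' hγ1
    have hsu : Summable (fun t : ℕ => γ ^ t * u t) := by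
      refine Summable.of_abs (Summable.of_nonneg_of_le (fun t => abs_nonneg _)
        (fun t => ?_) (hgeom.mul_right Vm))
      rw [abs_mul, abs_of_nonneg (pow_nonneg hγ0' t)]
      exact mul_le_mul_of_nonneg_left (huvec_bd π hπ t) (pow_nonneg hγ0' t)
    have hsu' : Summable (fun t : ℕ => γ ^ t * u (t+1)) := by
      refine Summable.of_abs (Summable.of_nonneg_of_le (fun t => abs_nonneg _)
        (fun t => ?_) (hgeom.mul_right Vm))
      rw [abs_mul, abs_of_nonneg (pow_nonneg hγ0' t)]
      exact mul_le_mul_of_nonneg_left (huvec_bd π hπ (t+1)) (pow_nonneg hγ0' t)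
    have hse : Summable (fun t : ℕ => γ ^ t * e t) := by
      refine Summable.of_abs (Summable.of_nonneg_of_le (fun t => abs_nonneg _)
        (fun t => ?_) (hgeom.mul_right Rmax))
      rw [abs_mul, abs_of_nonneg (pow_nonneg hγ0' t), abs_of_nonneg (heR_bd π hπ t).1]
      exact mul_le_mul_of_nonneg_left (heR_bd π hπ t).2 (pow_nonneg hγ0' t)
    have hd : Summable (fun t : ℕ => γ ^ t * (e t + γ * u (t+1) - u t)) := by
      have : (fun t : ℕ => γ ^ t * (e t + γ * u (t+1) - u t))
          = fun t : ℕ => (γ ^ t * e t + γ * (γ ^ t * u (t+1))) - γ ^ t * u t := by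
        funext t; ring
      rw [this]
      exact (hse.add (hsu'.mul_left γ)).sub hsu
    have hid : ∑' t : ℕ, γ ^ t * (e t + γ * u (t+1) - u t)
        = (∑' t : ℕ, γ ^ t * e t) + γ * (∑' t : ℕ, γ ^ t * u (t+1))
          - ∑' t : ℕ, γ ^ t * u t := by
      have h1 : (fun t : ℕ => γ ^ t * (e t + γ * u (t+1) - u t))
          = fun t : ℕ => (γ ^ t * e t + γ * (γ ^ t * u (t+1))) - γ ^ t * u t := by
        funext t; ring
      rw [h1, Summable.tsum_sub (hse.add (hsu'.mul_left γ)) hsu, Summable.tsum_add hse (hsu'.mul_left γ),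
        tsum_mul_left]
    have hshift : ∑' t : ℕ, γ ^ t * u t = u 0 + γ * ∑' t : ℕ, γ ^ t * u (t+1) := by
      rw [Summable.tsum_eq_zero_add hsu]
      simp only [pow_zero, one_mul]
      congr 1
      rw [← tsum_mul_left]
      congr 1
      funext t
      ring
    show valJ γ ν P r π = u 0 + ∑' t : ℕ, γ ^ t * (e t + γ * u (t+1) - u t)
    rw [hid, hshift, valJ]
    ring
  -- upper bound for every valid policy
  have upper : ∀ (π : List (Y × A) → Y → A → ℝ), validPol π →
      valJ γ ν P r π ≤ U0 + c / (1 - γ) := by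
    intro π hπ
    have hd_le : ∀ t : ℕ, expRtime ν P r π t + γ * AISaux.uvec ν P π φ0 φ VAIS (t+1)
        - AISaux.uvec ν P π φ0 φ VAIS t ≤ c := by
      intro t
      have h := step π hπ t
      have hT : (∑ wf : Fin (t+1) → Y × A, AISaux.hw ν P π wf *
          (QAIS (AISaux.Zof φ0 φ wf) ((wf 0).2) - VAIS (AISaux.Zof φ0 φ wf))) ≤ 0 := by
        refine Finset.sum_nonpos fun wf _ => ?_
        exact mul_nonpos_iff.mpr (Or.inl ⟨AISaux.hw_nonneg ν P π hν0 hP0 hπ wf,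
          sub_nonpos.mpr (hQle _ _)⟩)
      have h2 := (abs_le.mp h).2
      linarith
    have htsum_le : (∑' t : ℕ, γ ^ t * (expRtime ν P r π t
        + γ * AISaux.uvec ν P π φ0 φ VAIS (t+1) - AISaux.uvec ν P π φ0 φ VAIS t))
        ≤ c / (1 - γ) := by
      have h1 : (∑' t : ℕ, γ ^ t * (expRtime ν P r π t
          + γ * AISaux.uvec ν P π φ0 φ VAIS (t+1) - AISaux.uvec ν P π φ0 φ VAIS t))
          ≤ ∑' t : ℕ, γ ^ t * c := by
        refine Summable.tsum_le_tsum (fun t => ?_) (hd_sum π hπ) (hgeom.mul_right c)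
        exact mul_le_mul_of_nonneg_left (hd_le t) (pow_nonneg hγ0' t)
      refine le_trans h1 ?_
      rw [tsum_mul_right, tsum_geometric_of_lt_one hγ0' hγ1, div_eq_mul_inv, mul_comm]
    rw [tele π hπ, hU0 π hπ]
    exact add_le_add le_rfl htsum_le
  -- lower bound for the greedy policy
  have greedy_act : ∀ (n : ℕ) (wf : Fin (n+1) → Y × A), 0 < AISaux.hw ν P πg wf →
      (wf 0).2 = g (AISaux.Zof φ0 φ wf) := by
    intro n wf hpos
    by_contra hne
    have hzero : AISaux.hw ν P πg wf = 0 := by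
      rw [AISaux.hw]
      refine Finset.sum_eq_zero fun sv _ => ?_
      rw [AISaux.probTraj_trajF_succ]
      have hπg0 : πg (List.ofFn fun i => wf i.succ) ((wf 0).1) ((wf 0).2) = 0 := by
        dsimp only [πg]
        exact if_neg hne
      rw [hπg0, mul_zero, zero_mul]
    rw [hzero] at hpos
    exact lt_irrefl 0 hpos
  have lower : U0 - c / (1 - γ) ≤ valJ γ ν P r πg := by
    have hT0 : ∀ n : ℕ, (∑ wf : Fin (n+1) → Y × A, AISaux.hw ν P πg wf *
        (QAIS (AISaux.Zof φ0 φ wf) ((wf 0).2) - VAIS (AISaux.Zof φ0 φ wf))) = 0 := by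
      intro n
      refine Finset.sum_eq_zero fun wf _ => ?_
      rcases eq_or_lt_of_le (AISaux.hw_nonneg ν P πg hν0 hP0 hπgval wf) with h0 | hpos
      · rw [← h0, zero_mul]
      · rw [greedy_act n wf hpos, hg, sub_self, mul_zero]
    have hd_ge : ∀ t : ℕ, -c ≤ expRtime ν P r πg t + γ * AISaux.uvec ν P πg φ0 φ VAIS (t+1)
        - AISaux.uvec ν P πg φ0 φ VAIS t := by
      intro t
      have h := step πg hπgval t
      rw [hT0 t, sub_zero] at h
      exact (abs_le.mp h).1
    have htsum_ge : -(c / (1 - γ)) ≤ ∑' t : ℕ, γ ^ t * (expRtime ν P r πg t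
        + γ * AISaux.uvec ν P πg φ0 φ VAIS (t+1) - AISaux.uvec ν P πg φ0 φ VAIS t) := by
      have h1 : (∑' t : ℕ, γ ^ t * (-c))
          ≤ ∑' t : ℕ, γ ^ t * (expRtime ν P r πg t
            + γ * AISaux.uvec ν P πg φ0 φ VAIS (t+1) - AISaux.uvec ν P πg φ0 φ VAIS t) := by
        refine Summable.tsum_le_tsum (fun t => ?_) (hgeom.mul_right (-c)) (hd_sum πg hπgval)
        exact mul_le_mul_of_nonneg_left (hd_ge t) (pow_nonneg hγ0' t)
      refine le_trans ?_ h1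
      rw [tsum_mul_right, tsum_geometric_of_lt_one hγ0' hγ1]
      rw [div_eq_mul_inv, mul_comm]
      ring_nf
      exact le_rfl
    rw [tele πg hπgval, hU0 πg hπgval]
    have := htsum_ge
    linarith
  have hsup : (⨆ π : {π : List (Y × A) → Y → A → ℝ // validPol π}, valJ γ ν P r π.1)
      ≤ U0 + c / (1 - γ) := by
    have hne : Nonempty {π : List (Y × A) → Y → A → ℝ // validPol π} := ⟨⟨πg, hπgval⟩⟩
    exact ciSup_le fun π => upper π.1 π.2
  have hfinal : 2 / (1 - γ) * (ε + γ * δ * ρ) = c / (1 - γ) + c / (1 - γ) := by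
    rw [hc_def]; field_simp; ring
  rw [hfinal]
  have := lower
  linarith [hsup, lower]


end
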